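/- Let Σ be a compact metric space, P a Borel measurable map defined on a Borel subset dom(P) ⊆ Σ, and let M_P(Σ) denote the set of Borel probability measures on Σ invariant under P. Suppose φ : Σ → ℝ is continuous, c > 0, and ∫ φ dν < -c for every ν ∈ M_P(Σ), and suppose every weak* accumulation point of Birkhoff averages of Dirac measures along P-orbits is P-invariant. Then there exists N ∈ ℕ such that for every n > N and every x ∈ dom(P^{n-1}), (1/n) ∑_{k=0}^{n-1} φ(P^k(x)) < -c. -/

import Mathlib

open MeasureTheory Filter Topology Set Function
open BoundedContinuousFunction NNReal ENNReal

set_option linter.unusedSectionVars false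



-- NNReal partition identity
lemma nnreal_sum_min (t Δ : ℝ≥0) : ∀ n : ℕ, ∑ i ∈ Finset.range n, min Δ (t - i * Δ) = min t (n * Δ)
  | 0 => by simp
  | (n+1) => by
    rw [Finset.sum_range_succ, nnreal_sum_min t Δ n]
    rcases le_total t (n * Δ) with h | h
    · rw [min_eq_left h, tsub_eq_zero_of_le h, min_eq_right zero_le, add_zero,
        min_eq_left (h.trans (by push_cast; exact mul_le_mul_left (le_add_of_nonneg_right zero_le_one) Δ))]
    · rw [min_eq_right h]
      have : (↑(n+1) * Δ : ℝ≥0) = n * Δ + Δ := by push_cast; ring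
      rw [this, ← min_add_add_left, add_tsub_cancel_of_le h, min_comm]

section Riesz
variable {X : Type*} [MetricSpace X] [CompactSpace X]

variable (Λ : (X →ᵇ ℝ≥0) →ₗ[ℝ≥0] ℝ≥0)

noncomputable def rieszContentAuxB : TopologicalSpace.Compacts X → ℝ≥0 := fun K =>
  sInf (Λ '' { f : X →ᵇ ℝ≥0 | ∀ x ∈ K, (1 : ℝ≥0) ≤ f x })

theorem rieszContentAuxB_image_nonempty (K : TopologicalSpace.Compacts X) :
    (Λ '' { f : X →ᵇ ℝ≥0 | ∀ x ∈ K, (1 : ℝ≥0) ≤ f x }).Nonempty := by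
  rw [image_nonempty]
  exact ⟨(1 : X →ᵇ ℝ≥0), fun x _ => le_of_eq rfl⟩

theorem rieszContentAuxB_mono {K₁ K₂ : TopologicalSpace.Compacts X} (h : K₁ ≤ K₂) :
    rieszContentAuxB Λ K₁ ≤ rieszContentAuxB Λ K₂ :=
  csInf_le_csInf (OrderBot.bddBelow _) (rieszContentAuxB_image_nonempty Λ K₂)
    (image_mono (setOf_subset_setOf.mpr fun _ f_hyp x x_in_K₁ => f_hyp x (h x_in_K₁)))

theorem rieszContentAuxB_le {K : TopologicalSpace.Compacts X} {f : X →ᵇ ℝ≥0}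
    (h : ∀ x ∈ K, (1 : ℝ≥0) ≤ f x) : rieszContentAuxB Λ K ≤ Λ f :=
  csInf_le (OrderBot.bddBelow _) ⟨f, ⟨h, rfl⟩⟩

theorem exists_lt_rieszContentAuxB_add_pos (K : TopologicalSpace.Compacts X) {ε : ℝ≥0}
    (εpos : 0 < ε) : ∃ f : X →ᵇ ℝ≥0, (∀ x ∈ K, (1 : ℝ≥0) ≤ f x) ∧ Λ f < rieszContentAuxB Λ K + ε := by
  obtain ⟨α, ⟨⟨f, f_hyp⟩, α_hyp⟩⟩ :=
    exists_lt_of_csInf_lt (rieszContentAuxB_image_nonempty Λ K)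
      (lt_add_of_pos_right (rieszContentAuxB Λ K) εpos)
  refine ⟨f, f_hyp.left, ?_⟩
  rw [f_hyp.right]
  exact α_hyp

theorem rieszContentAuxB_sup_le (K1 K2 : TopologicalSpace.Compacts X) :
    rieszContentAuxB Λ (K1 ⊔ K2) ≤ rieszContentAuxB Λ K1 + rieszContentAuxB Λ K2 := by
  apply _root_.le_of_forall_pos_le_add
  intro ε εpos
  obtain ⟨f1, hf1⟩ := exists_lt_rieszContentAuxB_add_pos Λ K1 (half_pos εpos)
  obtain ⟨f2, hf2⟩ := exists_lt_rieszContentAuxB_add_pos Λ K2 (half_pos εpos)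
  have hu : ∀ x ∈ K1 ⊔ K2, (1 : ℝ≥0) ≤ (f1 + f2) x := by
    rintro x (hx | hx)
    · exact le_add_right (hf1.left x hx)
    · exact le_add_left (hf2.left x hx)
  apply (rieszContentAuxB_le Λ hu).trans (le_of_lt _)
  rw [map_add]
  apply lt_of_lt_of_le (_root_.add_lt_add hf1.right hf2.right) (le_of_eq _)
  rw [add_assoc, add_comm (ε / 2), add_assoc, add_halves ε, add_assoc]

lemma lam_mono {f g : X →ᵇ ℝ≥0} (h : ∀ x, f x ≤ g x) : Λ f ≤ Λ g := by
  have : g = f + mkOfCompact (g.toContinuousMap - f.toContinuousMap) := by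
    ext x
    simp [add_tsub_cancel_of_le (h x)]
  rw [this, map_add]
  exact le_self_add

/-- additivity on disjoint compacts -/
lemma rieszContentAux_sup_disjoint (K₁ K₂ : TopologicalSpace.Compacts X)
    (hd : Disjoint (K₁ : Set X) (K₂ : Set X)) :
    rieszContentAuxB Λ (K₁ ⊔ K₂) = rieszContentAuxB Λ K₁ + rieszContentAuxB Λ K₂ := by
  refine le_antisymm (rieszContentAuxB_sup_le Λ K₁ K₂) ?_
  rw [rieszContentAuxB]
  refine le_csInf (rieszContentAuxB_image_nonempty Λ _) ?_
  rintro b ⟨f, hf, rfl⟩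
  obtain ⟨u, hu₁, hu₂, hu₃⟩ :=
    exists_continuous_zero_one_of_isCompact K₁.isCompact K₂.isCompact.isClosed hd
  set v₁ : C(X, ℝ≥0) := ⟨fun x => Real.toNNReal (1 - u x),
    continuous_real_toNNReal.comp (continuous_const.sub u.continuous)⟩ with hv₁
  set v₂ : C(X, ℝ≥0) := ⟨fun x => Real.toNNReal (u x),
    continuous_real_toNNReal.comp u.continuous⟩ with hv₂
  have hsum : ∀ x, v₁ x + v₂ x = 1 := by
    intro x
    have h0 := (hu₃ x).1
    have h1 := (hu₃ x).2
    rw [hv₁, hv₂]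
    simp only [ContinuousMap.coe_mk]
    rw [← Real.toNNReal_add (by linarith) h0]
    norm_num
  have key : Λ (mkOfCompact (f.toContinuousMap * v₁)) + Λ (mkOfCompact (f.toContinuousMap * v₂)) = Λ f := by
    rw [← map_add]
    congr 1
    ext x
    rw [BoundedContinuousFunction.add_apply]
    simp only [mkOfCompact_apply, ContinuousMap.mul_apply, ContinuousMap.coe_coe]
    rw [← mul_add, hsum x, mul_one]
    rfl
  rw [← key]
  gcongr
  · refine rieszContentAuxB_le Λ (K := K₁) ?_
    intro x hx
    have hv : v₁ x = 1 := by
      rw [hv₁]; simp [hu₁ hx]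
    simp only [mkOfCompact_apply, ContinuousMap.mul_apply, ContinuousMap.coe_coe, hv, mul_one]
    exact hf x (Or.inl hx)
  · refine rieszContentAuxB_le Λ (K := K₂) ?_
    intro x hx
    have hv : v₂ x = 1 := by
      rw [hv₂]; simp [hu₂ hx]
    simp only [mkOfCompact_apply, ContinuousMap.mul_apply, ContinuousMap.coe_coe, hv, mul_one]
    exact hf x (Or.inr hx)

/-- The Riesz content as a `Content`. -/
noncomputable def rieszContent' : Content X where
  toFun := rieszContentAuxB Λ
  mono' := fun _ _ h => rieszContentAuxB_mono Λ h
  sup_disjoint' := fun K₁ K₂ hd _ _ => rieszContentAux_sup_disjoint Λ K₁ K₂ hd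
  sup_le' := rieszContentAuxB_sup_le Λ

lemma rieszContentAux_univ : rieszContentAuxB Λ ⊤ = Λ 1 := by
  refine le_antisymm (rieszContentAuxB_le Λ (fun x _ => le_refl _)) ?_
  refine le_csInf (rieszContentAuxB_image_nonempty Λ _) ?_
  rintro b ⟨f, hf, rfl⟩
  exact lam_mono Λ (fun x => hf x trivial)

variable [MeasurableSpace X] [BorelSpace X]

lemma rieszMeasure_univ : (rieszContent' Λ).measure univ = (Λ 1 : ℝ≥0∞) := by
  rw [Content.measure_apply _ MeasurableSet.univ,
    Content.outerMeasure_of_isOpen _ univ isOpen_univ]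
  have h := (rieszContent' Λ).innerContent_of_isCompact isCompact_univ isOpen_univ
  rw [h]
  have : (⟨univ, isCompact_univ⟩ : TopologicalSpace.Compacts X) = ⊤ := rfl
  rw [this]
  exact congrArg _ (rieszContentAux_univ Λ)

lemma step_bound (f : X →ᵇ ℝ≥0) {Δ : ℝ≥0} (hΔ : 0 < Δ) {n : ℕ} (hn : ∀ x, f x ≤ n * Δ) :
    (Λ f : ℝ≥0∞) ≤ Δ * Λ 1 + ∫⁻ x, (f x : ℝ≥0∞) ∂(rieszContent' Λ).measure := by
  set μ := (rieszContent' Λ).measure with hμ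
  -- the pieces
  set F : ℕ → X →ᵇ ℝ≥0 := fun i => mkOfCompact ⟨fun x => min Δ (f x - i * Δ),
    (continuous_const).min ((map_continuous f).sub continuous_const)⟩ with hF
  have hFx : ∀ i x, F i x = min Δ (f x - i * Δ) := fun i x => rfl
  have hsum : f = ∑ i ∈ Finset.range n, F i := by
    ext x
    rw [BoundedContinuousFunction.coe_sum, Finset.sum_apply]
    simp only [hFx]
    rw [nnreal_sum_min, min_eq_left (hn x)]
  -- superlevel sets
  set S : ℕ → Set X := fun i => {x | (i * Δ : ℝ≥0) ≤ f x} with hS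
  have hSclosed : ∀ i, IsClosed (S i) := fun i =>
    isClosed_le continuous_const (map_continuous f)
  have hSmeas : ∀ i, MeasurableSet (S i) := fun i => (hSclosed i).measurableSet
  set K : ℕ → TopologicalSpace.Compacts X := fun i =>
    ⟨closure {x | (i * Δ : ℝ≥0) < f x}, isClosed_closure.isCompact⟩ with hK
  have hKS : ∀ i, (K i : Set X) ⊆ S i := fun i =>
    closure_minimal (fun x hx => (le_of_lt hx : (↑i * Δ : ℝ≥0) ≤ f x)) (hSclosed i)
  -- Λ (F i) ≤ Δ * content (K i)
  have hstep : ∀ i, Λ (F i) ≤ Δ * rieszContentAuxB Λ (K i) := by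
    intro i
    have hle : ∀ g : X →ᵇ ℝ≥0, (∀ x ∈ K i, (1:ℝ≥0) ≤ g x) → Λ (F i) ≤ Δ * Λ g := by
      intro g hg
      have : ∀ x, F i x ≤ (Δ • g) x := by
        intro x
        rcases lt_or_ge ((i : ℝ≥0) * Δ) (f x) with h | h
        · have hx : x ∈ (K i : Set X) := subset_closure h
          have : (1:ℝ≥0) ≤ g x := hg x hx
          calc F i x ≤ Δ := min_le_left _ _
          _ = Δ * 1 := (mul_one Δ).symm
          _ ≤ Δ * g x := by gcongr
          _ = (Δ • g) x := rfl
        · have : f x - (i:ℝ≥0) * Δ = 0 := tsub_eq_zero_of_le h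
          rw [hFx, this]
          simp
      calc Λ (F i) ≤ Λ (Δ • g) := lam_mono Λ this
      _ = Δ * Λ g := by rw [Λ.map_smul]; rfl
    have h2 : Λ (F i) / Δ ≤ rieszContentAuxB Λ (K i) := by
      refine le_csInf (rieszContentAuxB_image_nonempty Λ _) ?_
      rintro b ⟨g, hg, rfl⟩
      rw [div_le_iff₀ hΔ, mul_comm]
      exact hle g hg
    calc Λ (F i) = Δ * (Λ (F i) / Δ) := by
          rw [mul_comm, div_mul_cancel₀ _ hΔ.ne']
    _ ≤ Δ * rieszContentAuxB Λ (K i) := by gcongr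
  -- content (K i) ≤ μ (S i)
  have hKmu : ∀ i, (rieszContentAuxB Λ (K i) : ℝ≥0∞) ≤ μ (S i) := by
    intro i
    calc (rieszContentAuxB Λ (K i) : ℝ≥0∞) = ((rieszContent' Λ) (K i) : ℝ≥0∞) := rfl
    _ ≤ (rieszContent' Λ).outerMeasure (K i) := (rieszContent' Λ).le_outerMeasure_compacts _
    _ = μ (K i) := (Content.measure_apply _ (K i).isCompact.isClosed.measurableSet).symm
    _ ≤ μ (S i) := measure_mono (hKS i)
  -- sum of indicators bound
  have hind : ∑ i ∈ Finset.Ico 1 n, (Δ : ℝ≥0∞) * μ (S i) ≤ ∫⁻ x, (f x : ℝ≥0∞) ∂μ := by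
    have heq : ∀ i, (Δ : ℝ≥0∞) * μ (S i)
        = ∫⁻ x, (S i).indicator (fun _ => (Δ : ℝ≥0∞)) x ∂μ := by
      intro i
      rw [lintegral_indicator_const (hSmeas i)]
    calc ∑ i ∈ Finset.Ico 1 n, (Δ : ℝ≥0∞) * μ (S i)
        = ∫⁻ x, ∑ i ∈ Finset.Ico 1 n, (S i).indicator (fun _ => (Δ : ℝ≥0∞)) x ∂μ := by
          rw [lintegral_finset_sum]
          · exact Finset.sum_congr rfl fun i _ => heq i
          · exact fun i _ => measurable_const.indicator (hSmeas i)
    _ ≤ ∫⁻ x, (f x : ℝ≥0∞) ∂μ := by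
      refine lintegral_mono fun x => ?_
      -- pointwise bound
      have hcard : ∑ i ∈ Finset.Ico 1 n, (S i).indicator (fun _ => (Δ : ℝ≥0∞)) x
          = ((Finset.Ico 1 n).filter (fun i => x ∈ S i)).card * (Δ : ℝ≥0∞) := by
        rw [Finset.sum_indicator_eq_sum_filter]
        rw [Finset.sum_const, nsmul_eq_mul]
      rw [hcard]
      have hsub : (Finset.Ico 1 n).filter (fun i => x ∈ S i)
          ⊆ Finset.Icc 1 (Nat.floor (f x / Δ)) := by
        intro i hi
        simp only [Finset.mem_filter, Finset.mem_Ico] at hi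
        obtain ⟨⟨h1, _⟩, h2⟩ := hi
        simp only [hS, mem_setOf_eq] at h2
        refine Finset.mem_Icc.mpr ⟨h1, Nat.le_floor ?_⟩
        rw [le_div_iff₀ hΔ]
        exact h2
      have hcardle : (((Finset.Ico 1 n).filter (fun i => x ∈ S i)).card : ℝ≥0)
          ≤ (Nat.floor (f x / Δ) : ℝ≥0) := by
        have h := Finset.card_le_card hsub
        rw [Nat.card_Icc, Nat.add_sub_cancel] at h
        exact_mod_cast h
      have hfloor : (Nat.floor (f x / Δ) : ℝ≥0) * Δ ≤ f x := by
        calc (Nat.floor (f x / Δ) : ℝ≥0) * Δ ≤ (f x / Δ) * Δ := by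
              gcongr
              exact Nat.floor_le zero_le
        _ = f x := div_mul_cancel₀ _ hΔ.ne'
      calc (((Finset.Ico 1 n).filter (fun i => x ∈ S i)).card : ℝ≥0∞) * (Δ : ℝ≥0∞)
          ≤ ((Nat.floor (f x / Δ) : ℝ≥0) : ℝ≥0∞) * (Δ : ℝ≥0∞) := by
            gcongr
            exact_mod_cast hcardle
      _ = (((Nat.floor (f x / Δ) : ℝ≥0) * Δ : ℝ≥0) : ℝ≥0∞) := by
            rw [ENNReal.coe_mul]
      _ ≤ ((f x : ℝ≥0) : ℝ≥0∞) := by exact_mod_cast hfloor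
  -- combine
  calc (Λ f : ℝ≥0∞) = ∑ i ∈ Finset.range n, (Λ (F i) : ℝ≥0∞) := by
        rw [hsum, map_sum]
        rw [ENNReal.coe_finset_sum]
  _ ≤ ∑ i ∈ Finset.range n, (Δ : ℝ≥0∞) * μ (S i) := by
        refine Finset.sum_le_sum fun i _ => ?_
        calc (Λ (F i) : ℝ≥0∞) ≤ ((Δ * rieszContentAuxB Λ (K i) : ℝ≥0) : ℝ≥0∞) := by
              exact_mod_cast hstep i
        _ = (Δ : ℝ≥0∞) * (rieszContentAuxB Λ (K i) : ℝ≥0∞) := by push_cast; ring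
        _ ≤ (Δ : ℝ≥0∞) * μ (S i) := by gcongr; exact hKmu i
  _ ≤ (Δ : ℝ≥0∞) * μ univ + ∑ i ∈ Finset.Ico 1 n, (Δ : ℝ≥0∞) * μ (S i) := by
        rcases Nat.eq_zero_or_pos n with hn0 | hn0
        · simp [hn0]
        · rw [Finset.range_eq_Ico, ← Finset.sum_Ico_consecutive _ (Nat.zero_le 1) hn0]
          gcongr
          simp only [Finset.sum_Ico_eq_sum_range]
          simp only [Nat.sub_zero]
          rw [Finset.sum_range_one]
          gcongr
          exact subset_univ _
  _ ≤ (Δ : ℝ≥0∞) * Λ 1 + ∫⁻ x, (f x : ℝ≥0∞) ∂μ := by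
        refine add_le_add (le_of_eq ?_) hind
        rw [hμ, rieszMeasure_univ]

lemma bcf_exists_bound (f : X →ᵇ ℝ≥0) : ∃ c : ℝ≥0, ∀ x, f x ≤ c := by
  rcases isEmpty_or_nonempty X with h | h
  · exact ⟨0, fun x => (h.false x).elim⟩
  · obtain ⟨x₀, -, hx₀⟩ := isCompact_univ.exists_isMaxOn univ_nonempty
      ((map_continuous f).continuousOn (s := univ))
    exact ⟨f x₀, fun x => hx₀ (mem_univ x)⟩

lemma lam_le_lintegral (f : X →ᵇ ℝ≥0) :
    (Λ f : ℝ≥0∞) ≤ ∫⁻ x, (f x : ℝ≥0∞) ∂(rieszContent' Λ).measure := by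
  by_cases hfin : ∫⁻ x, (f x : ℝ≥0∞) ∂(rieszContent' Λ).measure = ∞
  · rw [hfin]; exact le_top
  refine ENNReal.le_of_forall_pos_le_add fun ε hε _ => ?_
  obtain ⟨c, hc⟩ := bcf_exists_bound f
  set Δ : ℝ≥0 := ε / (Λ 1 + 1) with hΔdef
  have hΔ : 0 < Δ := by
    apply div_pos hε
    positivity
  obtain ⟨n, hn⟩ := exists_nat_ge (c / Δ)
  have hnn : ∀ x, f x ≤ n * Δ := by
    intro x
    calc f x ≤ c := hc x
    _ = (c / Δ) * Δ := (div_mul_cancel₀ _ hΔ.ne').symm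
    _ ≤ n * Δ := by gcongr
  have hkey := step_bound Λ f hΔ hnn
  have hsmall : (Δ : ℝ≥0∞) * (Λ 1 : ℝ≥0∞) ≤ (ε : ℝ≥0∞) := by
    rw [← ENNReal.coe_mul]
    refine ENNReal.coe_le_coe.mpr ?_
    rw [hΔdef, div_mul_eq_mul_div]
    rw [div_le_iff₀ (by positivity)]
    calc ε * Λ 1 ≤ ε * (Λ 1 + 1) := by gcongr; exact le_add_of_nonneg_right zero_le
    _ = ε * (Λ 1 + 1) := rfl
  calc (Λ f : ℝ≥0∞) ≤ (Δ : ℝ≥0∞) * Λ 1 + ∫⁻ x, (f x : ℝ≥0∞) ∂(rieszContent' Λ).measure :=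
        hkey
  _ ≤ (ε : ℝ≥0∞) + ∫⁻ x, (f x : ℝ≥0∞) ∂(rieszContent' Λ).measure := by gcongr
  _ = ∫⁻ x, (f x : ℝ≥0∞) ∂(rieszContent' Λ).measure + ε := add_comm _ _

lemma lintegral_eq_lam (f : X →ᵇ ℝ≥0) :
    ∫⁻ x, (f x : ℝ≥0∞) ∂(rieszContent' Λ).measure = (Λ f : ℝ≥0∞) := by
  set μ := (rieszContent' Λ).measure with hμ
  obtain ⟨c, hc⟩ := bcf_exists_bound f
  set g : X →ᵇ ℝ≥0 := mkOfCompact ⟨fun x => c - f x,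
    continuous_const.sub (map_continuous f)⟩ with hg
  have hgx : ∀ x, g x = c - f x := fun x => rfl
  have hfg : ∀ x, f x + g x = c := by
    intro x
    rw [hgx, add_tsub_cancel_of_le (hc x)]
  have hfgB : f + g = c • (1 : X →ᵇ ℝ≥0) := by
    ext x
    have : (c • (1 : X →ᵇ ℝ≥0)) x = c := by
      rw [BoundedContinuousFunction.smul_apply]
      simp [smul_eq_mul]
    rw [BoundedContinuousFunction.add_apply, this, hfg x]
  have hΛsum : Λ f + Λ g = c * Λ 1 := by
    rw [← map_add, hfgB, Λ.map_smul]; rfl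
  have hmeasf : Measurable fun x => ((f x : ℝ≥0) : ℝ≥0∞) :=
    measurable_coe_nnreal_ennreal.comp (map_continuous f).measurable
  have hmeasg : Measurable fun x => ((g x : ℝ≥0) : ℝ≥0∞) :=
    measurable_coe_nnreal_ennreal.comp (map_continuous g).measurable
  have hIsum : (∫⁻ x, (f x : ℝ≥0∞) ∂μ) + (∫⁻ x, (g x : ℝ≥0∞) ∂μ) = (c : ℝ≥0∞) * Λ 1 := by
    rw [← lintegral_add_left hmeasf]
    have : ∀ x, ((f x : ℝ≥0∞)) + ((g x : ℝ≥0∞)) = (c : ℝ≥0∞) := by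
      intro x
      rw [← ENNReal.coe_add, hfg x]
    calc ∫⁻ x, ((f x : ℝ≥0∞) + (g x : ℝ≥0∞)) ∂μ = ∫⁻ _, (c : ℝ≥0∞) ∂μ := by
          exact lintegral_congr this
    _ = (c : ℝ≥0∞) * μ univ := by rw [lintegral_const]
    _ = (c : ℝ≥0∞) * Λ 1 := by rw [hμ, rieszMeasure_univ]
  have h1 := lam_le_lintegral Λ f
  have h2 := lam_le_lintegral Λ g
  refine le_antisymm ?_ h1
  have hfin : (∫⁻ x, (g x : ℝ≥0∞) ∂μ) ≠ ∞ := by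
    intro hcon
    rw [hcon] at hIsum
    simp only [add_top] at hIsum
    exact (ENNReal.mul_lt_top ENNReal.coe_lt_top ENNReal.coe_lt_top).ne hIsum.symm
  have : (∫⁻ x, (f x : ℝ≥0∞) ∂μ) + Λ g ≤ (Λ f : ℝ≥0∞) + Λ g := by
    calc (∫⁻ x, (f x : ℝ≥0∞) ∂μ) + (Λ g : ℝ≥0∞)
        ≤ (∫⁻ x, (f x : ℝ≥0∞) ∂μ) + ∫⁻ x, (g x : ℝ≥0∞) ∂μ := by gcongr
    _ = (c : ℝ≥0∞) * Λ 1 := hIsum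
    _ = ((c * Λ 1 : ℝ≥0) : ℝ≥0∞) := by push_cast; ring
    _ = ((Λ f + Λ g : ℝ≥0) : ℝ≥0∞) := by rw [hΛsum]
    _ = (Λ f : ℝ≥0∞) + Λ g := by push_cast; ring
  have hne : (Λ g : ℝ≥0∞) ≠ ∞ := ENNReal.coe_ne_top
  exact (ENNReal.add_le_add_iff_right hne).mp this

theorem riesz_representation {Y : Type*} [MetricSpace Y] [CompactSpace Y]
    [MeasurableSpace Y] [BorelSpace Y]
    (L : C(Y, ℝ) → ℝ)
    (hadd : ∀ f g, L (f + g) = L f + L g)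
    (hsmul : ∀ (a : ℝ) f, L (a • f) = a * L f)
    (hpos : ∀ f, (∀ x, 0 ≤ f x) → 0 ≤ L f)
    (h1 : L 1 = 1) :
    ∃ μ : Measure Y, IsProbabilityMeasure μ ∧ ∀ f : C(Y, ℝ), ∫ x, f x ∂μ = L f := by
  classical
  set toC : (Y →ᵇ ℝ≥0) → C(Y, ℝ) := fun f =>
    ⟨fun x => (f x : ℝ), NNReal.continuous_coe.comp (map_continuous f)⟩ with htoC
  have htoC_apply : ∀ (f : Y →ᵇ ℝ≥0) x, toC f x = (f x : ℝ) := fun f x => rfl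
  have htoC_nonneg : ∀ f : Y →ᵇ ℝ≥0, ∀ x, 0 ≤ toC f x := fun f x => (f x).coe_nonneg
  set Λ : (Y →ᵇ ℝ≥0) →ₗ[ℝ≥0] ℝ≥0 :=
    { toFun := fun f => Real.toNNReal (L (toC f))
      map_add' := by
        intro f g
        have he : toC (f + g) = toC f + toC g := by
          ext x
          simp only [htoC_apply, ContinuousMap.add_apply, BoundedContinuousFunction.add_apply]
          push_cast
          ring
        show Real.toNNReal (L (toC (f+g))) = _
        rw [he, hadd]
        rw [Real.toNNReal_add (hpos _ (htoC_nonneg f)) (hpos _ (htoC_nonneg g))]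
      map_smul' := by
        intro c f
        have he : toC (c • f) = (c : ℝ) • toC f := by
          ext x
          simp only [htoC_apply, ContinuousMap.smul_apply, BoundedContinuousFunction.smul_apply,
            smul_eq_mul]
          push_cast
          ring
        show Real.toNNReal (L (toC (c • f))) = _
        rw [he, hsmul]
        rw [Real.toNNReal_mul c.coe_nonneg]
        simp only [RingHom.id_apply, smul_eq_mul]
        simp [Real.toNNReal_coe] } with hΛ
  have hΛ_apply : ∀ f : Y →ᵇ ℝ≥0, Λ f = Real.toNNReal (L (toC f)) := fun f => rfl
  have hΛ1 : Λ 1 = 1 := by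
    rw [hΛ_apply]
    have : toC 1 = (1 : C(Y, ℝ)) := by
      ext x
      rw [htoC_apply]
      simp
    rw [this, h1, Real.toNNReal_one]
  set μ := (rieszContent' Λ).measure with hμ
  have hprob : IsProbabilityMeasure μ := by
    constructor
    rw [hμ, rieszMeasure_univ, hΛ1, ENNReal.coe_one]
  refine ⟨μ, hprob, ?_⟩
  -- first for nonneg functions
  have hnn : ∀ g : C(Y, ℝ), (∀ x, 0 ≤ g x) → ∫ x, g x ∂μ = L g := by
    intro g hg
    set gnn : Y →ᵇ ℝ≥0 := mkOfCompact ⟨fun x => Real.toNNReal (g x),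
      continuous_real_toNNReal.comp (map_continuous g)⟩ with hgnn
    have hgnnx : ∀ x, (gnn x : ℝ) = g x := by
      intro x
      exact Real.coe_toNNReal _ (hg x)
    have htoCg : toC gnn = g := by
      ext x
      rw [htoC_apply, hgnnx]
    have hlin := lintegral_eq_lam Λ gnn
    have h1' : ∫ x, g x ∂μ
        = (∫⁻ x, ENNReal.ofReal (g x) ∂μ).toReal := by
      refine integral_eq_lintegral_of_nonneg_ae ?_ ?_
      · exact Filter.Eventually.of_forall hg
      · exact (map_continuous g).aestronglyMeasurable
    have h2' : ∀ x, ENNReal.ofReal (g x) = ((gnn x : ℝ≥0) : ℝ≥0∞) := by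
      intro x
      rfl
    rw [h1']
    rw [lintegral_congr h2', hlin, hΛ_apply, htoCg]
    rw [ENNReal.coe_toReal, Real.coe_toNNReal _ (hpos g hg)]
  intro f
  set r : ℝ := ‖f‖ with hr
  have hfr : ∀ x, 0 ≤ (f + ContinuousMap.const Y r) x := by
    intro x
    simp only [ContinuousMap.add_apply, ContinuousMap.const_apply]
    have h2 : |f x| ≤ ‖f‖ := by
      rw [← Real.norm_eq_abs]
      exact f.norm_coe_le_norm x
    have h := (abs_le.mp h2).1
    linarith
  have hconst : ContinuousMap.const Y r = r • (1 : C(Y, ℝ)) := by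
    ext x
    simp
  have key := hnn (f + ContinuousMap.const Y r) hfr
  have hLsplit : L (f + ContinuousMap.const Y r) = L f + r := by
    rw [hadd, hconst, hsmul, h1, mul_one]
  have hint_f : Integrable (fun x => f x) μ := (mkOfCompact f).integrable μ
  have hIsplit : ∫ x, (f + ContinuousMap.const Y r) x ∂μ = (∫ x, f x ∂μ) + r := by
    have : ∫ x, (f x + r) ∂μ = (∫ x, f x ∂μ) + ∫ _, r ∂μ :=
      integral_add hint_f (integrable_const r)
    simp only [ContinuousMap.add_apply, ContinuousMap.const_apply]
    rw [this, integral_const]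
    simp [measure_univ]
  rw [hIsplit, hLsplit] at key
  linarith

end Riesz


/-- Proposition `cphi`: if every invariant probability measure integrates a continuous
function `φ` below `-c`, and every weak* accumulation point of Birkhoff averages of Dirac
measures along `P`-orbits is `P`-invariant, then all sufficiently long Birkhoff sums of `φ`
along orbits in the domain are below `-c`. -/
theorem stmt0
    {X : Type*} [MetricSpace X] [CompactSpace X] [MeasurableSpace X] [BorelSpace X]
    (P : X → X) (dom : Set X) (hdomMeas : MeasurableSet dom) (hPmeas : Measurable P)
    (φ : X → ℝ) (hφ : Continuous φ) (c : ℝ) (hc : 0 < c)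
    (hint : ∀ ν : Measure X, IsProbabilityMeasure ν → ν.map P = ν →
      ∫ x, φ x ∂ν < -c)
    (hacc : ∀ μ : Measure X, IsProbabilityMeasure μ →
      ∀ (n : ℕ → ℕ) (x : ℕ → X),
        (∀ j, 1 ≤ n j) →
        (∀ j, ∀ k, k < n j - 1 → P^[k] (x j) ∈ dom) →
        Tendsto n atTop atTop →
        (∀ f : C(X, ℝ), Tendsto
          (fun j => (∑ k ∈ Finset.range (n j), f (P^[k] (x j))) / (n j : ℝ))
          atTop (𝓝 (∫ x, f x ∂μ))) →
        μ.map P = μ) :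
    ∃ N : ℕ, ∀ n : ℕ, N < n → ∀ x : X,
      (∀ k, k < n - 1 → P^[k] x ∈ dom) →
      (∑ k ∈ Finset.range n, φ (P^[k] x)) / (n : ℝ) < -c := by
  classical
  by_contra hcon
  push_neg at hcon
  choose n hn x hdom havg using hcon
  -- the averaging functionals
  set T : ℕ → C(X, ℝ) → ℝ :=
    fun j f => (∑ k ∈ Finset.range (n j), f (P^[k] (x j))) / (n j : ℝ) with hT
  have hnpos : ∀ j, 0 < n j := fun j => Nat.lt_of_le_of_lt (Nat.zero_le j) (hn j)
  have hnne : ∀ j, ((n j : ℝ)) ≠ 0 := fun j => Nat.cast_ne_zero.mpr (hnpos j).ne'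
  have hT1 : ∀ j, T j 1 = 1 := by
    intro j
    simp only [hT, ContinuousMap.one_apply]
    rw [Finset.sum_const, Finset.card_range, nsmul_eq_mul, mul_one, div_self (hnne j)]
  have hTadd : ∀ j f g, T j (f + g) = T j f + T j g := by
    intro j f g
    simp only [hT, ContinuousMap.add_apply]
    rw [Finset.sum_add_distrib, add_div]
  have hTsmul : ∀ j (a : ℝ) f, T j (a • f) = a * T j f := by
    intro j a f
    simp only [hT, ContinuousMap.smul_apply, smul_eq_mul]
    rw [← Finset.mul_sum, mul_div_assoc]
  have hTpos : ∀ j f, (∀ y, 0 ≤ f y) → 0 ≤ T j f := by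
    intro j f hf
    apply div_nonneg _ (Nat.cast_nonneg _)
    exact Finset.sum_nonneg fun k _ => hf _
  have hTbound : ∀ j f, |T j f| ≤ ‖f‖ := by
    intro j f
    rw [hT, abs_div, abs_of_nonneg (show (0:ℝ) ≤ ((n j : ℕ):ℝ) from Nat.cast_nonneg _)]
    rw [div_le_iff₀ (by exact_mod_cast hnpos j)]
    calc |∑ k ∈ Finset.range (n j), f (P^[k] (x j))|
        ≤ ∑ k ∈ Finset.range (n j), |f (P^[k] (x j))| := Finset.abs_sum_le_sum_abs _ _
    _ ≤ ∑ _k ∈ Finset.range (n j), ‖f‖ := by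
        refine Finset.sum_le_sum fun k _ => ?_
        rw [← Real.norm_eq_abs]
        exact f.norm_coe_le_norm _
    _ = ‖f‖ * (n j : ℝ) := by
        rw [Finset.sum_const, Finset.card_range, nsmul_eq_mul, mul_comm]
  have hTlip : ∀ j (f g : C(X, ℝ)), |T j f - T j g| ≤ dist f g := by
    intro j f g
    have h1 : f = g + (f - g) := by ring
    have he : g + (f - g) = f := by ring
    have h2 : T j f = T j g + T j (f - g) := by rw [← hTadd, he]
    rw [h2, add_sub_cancel_left, dist_eq_norm]
    exact hTbound j (f - g)
  -- dense sequence in C(X,ℝ)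
  haveI : Nonempty C(X, ℝ) := ⟨1⟩
  set g : ℕ → C(X, ℝ) := TopologicalSpace.denseSeq C(X, ℝ) with hg
  have hdense : DenseRange g := TopologicalSpace.denseRange_denseSeq C(X, ℝ)
  -- subsequence along which all T j (g i) converge
  set K : Set (ℕ → ℝ) := Set.pi univ (fun i => Icc (-‖g i‖) ‖g i‖) with hK
  have hKc : IsCompact K := isCompact_univ_pi fun i => isCompact_Icc
  have hmem : ∀ j, (fun i => T j (g i)) ∈ K := by
    intro j i _
    exact abs_le.mp (hTbound j (g i))
  obtain ⟨ℓ, -, ψ, hψmono, hψtendsto⟩ := hKc.tendsto_subseq hmem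
  have hconv : ∀ i, Tendsto (fun j => T (ψ j) (g i)) atTop (𝓝 (ℓ i)) := by
    intro i
    have := tendsto_pi_nhds.mp hψtendsto i
    exact this
  -- all averages along the subsequence converge
  have hex : ∀ f : C(X, ℝ), ∃ r, Tendsto (fun j => T (ψ j) f) atTop (𝓝 r) := by
    intro f
    have hcau : CauchySeq (fun j => T (ψ j) f) := by
      rw [Metric.cauchySeq_iff]
      intro ε hε
      obtain ⟨i, hi⟩ := Metric.denseRange_iff.mp hdense f (ε / 4) (by linarith)
      have hcau_i : CauchySeq (fun j => T (ψ j) (g i)) := (hconv i).cauchySeq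
      obtain ⟨N, hN⟩ := Metric.cauchySeq_iff.mp hcau_i (ε / 4) (by linarith)
      refine ⟨N, fun j hj k hk => ?_⟩
      have h1 : |T (ψ j) f - T (ψ j) (g i)| ≤ dist f (g i) := by
        have := hTlip (ψ j) f (g i); rwa [dist_comm f (g i)] at this ⊢
      have h2 : |T (ψ k) f - T (ψ k) (g i)| ≤ dist f (g i) := by
        have := hTlip (ψ k) f (g i); rwa [dist_comm f (g i)] at this ⊢
      have h3 := hN j hj k hk
      rw [Real.dist_eq] at h3 ⊢
      have e1 := abs_le.mp h1
      have e2 := abs_le.mp h2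
      have e3 := abs_le.mp h3.le
      rw [abs_lt]
      constructor <;> nlinarith [hi]
    exact cauchySeq_tendsto_of_complete hcau
  choose L hL using hex
  -- Riesz representation of L
  obtain ⟨μ, hμprob, hμint⟩ := riesz_representation L
    (fun f g' => tendsto_nhds_unique (hL (f + g'))
      (by simpa only [hTadd] using (hL f).add (hL g')))
    (fun a f => tendsto_nhds_unique (hL (a • f))
      (by simpa only [hTsmul] using (hL f).const_mul a))
    (fun f hf => ge_of_tendsto' (hL f) (fun j => hTpos (ψ j) f hf))
    (tendsto_nhds_unique (hL 1) (by simpa only [hT1] using tendsto_const_nhds))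
  -- μ is invariant
  have hinv : μ.map P = μ := by
    refine hacc μ hμprob (fun j => n (ψ j)) (fun j => x (ψ j))
      (fun j => hnpos (ψ j)) (fun j => hdom (ψ j)) ?_ ?_
    · refine tendsto_atTop_mono (fun j => ?_) tendsto_id
      exact (hψmono.id_le j).trans (hn (ψ j)).le
    · intro f
      rw [hμint f]
      exact hL f
  have hlt := hint μ hμprob hinv
  -- but the averages of φ are ≥ -c
  set fφ : C(X, ℝ) := ⟨φ, hφ⟩ with hfφ
  have hφint : ∫ x, fφ x ∂μ = L fφ := hμint fφ
  have hφlim : Tendsto (fun j => T (ψ j) fφ) atTop (𝓝 (L fφ)) := hL fφ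
  have hφge : -c ≤ L fφ := ge_of_tendsto' hφlim (fun j => havg (ψ j))
  have : ∫ x, φ x ∂μ = L fφ := hφint
  linarith
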